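/- Let T > 0, let d ≥ 1, and let K ⊂ ℝ^d be a nonempty compact set. Let f : (0,T) × K → [0,∞) and ḟ : (0,T) × K → ℝ be functions such that: (a) for every λ ∈ K and t ∈ (0,T), the function t ↦ f(t,λ) is differentiable at t with derivative ḟ(t,λ), and the functions t ↦ f(t,λ) and t ↦ ḟ(t,λ) are continuous on (0,T); (b) the families {f(·,λ)}_{λ∈K} and {ḟ(·,λ)}_{λ∈K} are uniformly equicontinuous with respect to t, i.e., for every ε > 0 there is δ > 0 such that for all λ ∈ K and all t,s ∈ (0,T) with |t−s| < δ one has |f(t,λ) − f(s,λ)| < ε and |ḟ(t,λ) − ḟ(s,λ)| < ε; (c) for every t ∈ (0,T), the functions λ ↦ f(t,λ) and λ ↦ ḟ(t,λ) are continuous on K. Define F(t) = sup_{λ∈K} f(t,λ). Then for almost every t ∈ (0,T), F is differentiable at t and there exists λ* ∈ K such that simultaneously F(t) = f(t,λ*) and F'(t) = ḟ(t,λ*). -/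
import Mathlib


open MeasureTheory

/-- **interchanging the spatial supremum with the time derivative.**
Under differentiability in time, uniform equicontinuity in time, and continuity in the
parameter over a compact set `K`, the supremum `F(t) = sup_{λ∈K} f(t,λ)` is, for almost
every `t ∈ (0,T)`, differentiable at `t` with derivative `ḟ(t,λ*)` for some maximizer
`λ* ∈ K` with `F(t) = f(t,λ*)`. -/
theorem ae_deriv_sup_eq_deriv_at_max (T : ℝ) (hT : 0 < T) (d : ℕ) (hd : 1 ≤ d)
    (K : Set (EuclideanSpace ℝ (Fin d))) (hK : IsCompact K) (hKne : K.Nonempty)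
    (f fdot : ℝ → EuclideanSpace ℝ (Fin d) → ℝ)
    (hf_nonneg : ∀ t ∈ Set.Ioo 0 T, ∀ lam ∈ K, 0 ≤ f t lam)
    (hf_deriv : ∀ lam ∈ K, ∀ t ∈ Set.Ioo 0 T, HasDerivAt (fun s => f s lam) (fdot t lam) t)
    (hf_cont_t : ∀ lam ∈ K, ContinuousOn (fun t => f t lam) (Set.Ioo 0 T))
    (hfdot_cont_t : ∀ lam ∈ K, ContinuousOn (fun t => fdot t lam) (Set.Ioo 0 T))
    (hequi : ∀ ε > 0, ∃ δ > 0, ∀ lam ∈ K, ∀ t ∈ Set.Ioo 0 T, ∀ s ∈ Set.Ioo 0 T,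
      |t - s| < δ → |f t lam - f s lam| < ε ∧ |fdot t lam - fdot s lam| < ε)
    (hf_cont_lam : ∀ t ∈ Set.Ioo 0 T, ContinuousOn (f t) K)
    (hfdot_cont_lam : ∀ t ∈ Set.Ioo 0 T, ContinuousOn (fdot t) K) :
    ∀ᵐ t ∂(volume.restrict (Set.Ioo 0 T)),
      ∃ lam ∈ K, sSup (f t '' K) = f t lam ∧
        HasDerivAt (fun s => sSup (f s '' K)) (fdot t lam) t := by
  set F : ℝ → ℝ := fun t => sSup (f t '' K) with hFdef
  have ht0 : (T / 2) ∈ Set.Ioo (0 : ℝ) T := ⟨by positivity, by linarith⟩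
  -- a bound for `fdot` at time `T/2`
  obtain ⟨lam0, hlam0, hmaxC⟩ :=
    hK.exists_isMaxOn hKne ((hfdot_cont_lam _ ht0).abs)
  set C : ℝ := |fdot (T / 2) lam0| with hCdef
  have hC0 : 0 ≤ C := abs_nonneg _
  have hC : ∀ lam ∈ K, |fdot (T / 2) lam| ≤ C := fun lam hlam => hmaxC hlam
  -- equicontinuity with ε = 1
  obtain ⟨δ, hδ, hδ'⟩ := hequi 1 one_pos
  set N : ℕ := ⌈T / δ⌉₊ + 1 with hNdef
  have hN0 : (0 : ℝ) < N := by positivity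
  have hNne : (N : ℝ) ≠ 0 := ne_of_gt hN0
  have hNgt : T / δ < N := by
    calc T / δ ≤ (⌈T / δ⌉₊ : ℝ) := Nat.le_ceil _
    _ < N := by push_cast [hNdef]; linarith
  have hTN : T / N < δ := by
    rw [div_lt_iff₀ hN0]
    have := (div_lt_iff₀ hδ).1 hNgt
    linarith [this]
  -- global bound on fdot via chaining
  have key : ∀ lam ∈ K, ∀ t ∈ Set.Ioo 0 T, |fdot t lam| ≤ C + N := by
    intro lam hlam t ht
    set u : ℕ → ℝ := fun i => T / 2 + ((i : ℝ) / N) * (t - T / 2) with hu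
    have hmemu : ∀ i ≤ N, u i ∈ Set.Ioo (0 : ℝ) T := by
      intro i hi
      have h1 : (0 : ℝ) ≤ (i : ℝ) / N := by positivity
      have h2 : (i : ℝ) / N ≤ 1 := by
        rw [div_le_one hN0]; exact_mod_cast hi
      have := (convex_Ioo (0 : ℝ) T) ht0 ht
        (by linarith : (0 : ℝ) ≤ 1 - (i : ℝ) / N) h1 (by ring)
      have heq : (1 - (i : ℝ) / N) • (T / 2) + ((i : ℝ) / N) • t = u i := by
        simp only [smul_eq_mul, hu]; ring
      rwa [heq] at this
    have hstep : ∀ i, i < N → |fdot (u (i + 1)) lam - fdot (u i) lam| < 1 := by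
      intro i hi
      have hd : |u (i + 1) - u i| < δ := by
        have : u (i + 1) - u i = (t - T / 2) / N := by
          simp only [hu]; push_cast; field_simp; ring
        rw [this, abs_div, abs_of_pos hN0]
        have habs : |t - T / 2| < T := by
          rw [abs_lt]; constructor <;> [linarith [ht.1]; linarith [ht.2]]
        calc |t - T / 2| / N < T / N := by gcongr
          _ < δ := hTN
      exact (hδ' lam hlam (u (i + 1)) (hmemu _ (by omega)) (u i)
        (hmemu _ (by omega)) hd).2
    have hchain : ∀ i, i ≤ N → |fdot (u i) lam - fdot (T / 2) lam| ≤ i := by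
      intro i
      induction i with
      | zero => intro _; simp [hu]
      | succ n ih =>
        intro hn
        have h1 := ih (by omega)
        have h2 := hstep n (by omega)
        calc |fdot (u (n + 1)) lam - fdot (T / 2) lam|
            ≤ |fdot (u (n + 1)) lam - fdot (u n) lam| +
              |fdot (u n) lam - fdot (T / 2) lam| := abs_sub_le _ _ _
          _ ≤ ((n : ℝ) + 1) := by linarith
          _ = ((n + 1 : ℕ) : ℝ) := by push_cast; ring
    have huN : u N = t := by
      simp only [hu]; rw [div_self hNne]; ring
    have hfin := hchain N le_rfl
    rw [huN] at hfin
    have htri := abs_add_le (fdot t lam - fdot (T / 2) lam) (fdot (T / 2) lam)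
    have heq : fdot t lam - fdot (T / 2) lam + fdot (T / 2) lam = fdot t lam := by ring
    rw [heq] at htri
    have := hC lam hlam
    linarith
  set M : ℝ := C + N with hMdef
  have hM0 : (0 : ℝ) ≤ M := by positivity
  -- each f(·, lam) is M-Lipschitz on (0,T)
  have hlip : ∀ lam ∈ K,
      LipschitzOnWith M.toNNReal (fun s => f s lam) (Set.Ioo 0 T) := by
    intro lam hlam
    apply (convex_Ioo (0 : ℝ) T).lipschitzOnWith_of_nnnorm_hasDerivWithin_le
      (f' := fun t => fdot t lam)
      (fun t ht => (hf_deriv lam hlam t ht).hasDerivWithinAt)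
    intro t ht
    rw [← NNReal.coe_le_coe, coe_nnnorm, Real.norm_eq_abs, Real.coe_toNNReal _ hM0]
    exact key lam hlam t ht
  have hne : ∀ s : ℝ, (f s '' K).Nonempty := fun s => hKne.image _
  have hbdd : ∀ s ∈ Set.Ioo (0 : ℝ) T, BddAbove (f s '' K) := fun s hs =>
    hK.bddAbove_image (hf_cont_lam s hs)
  have hleF : ∀ s ∈ Set.Ioo (0 : ℝ) T, ∀ lam ∈ K, f s lam ≤ F s := fun s hs lam hlam =>
    le_csSup (hbdd s hs) ⟨lam, hlam, rfl⟩
  -- F is M-Lipschitz on (0,T)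
  have hFlip : LipschitzOnWith M.toNNReal F (Set.Ioo 0 T) := by
    rw [lipschitzOnWith_iff_dist_le_mul]
    intro x hx y hy
    have hM' : (M.toNNReal : ℝ) = M := Real.coe_toNNReal _ hM0
    rw [Real.dist_eq, Real.dist_eq, hM']
    have hdir : ∀ a ∈ Set.Ioo (0 : ℝ) T, ∀ b ∈ Set.Ioo (0 : ℝ) T,
        F a - F b ≤ M * |a - b| := by
      intro a ha b hb
      rw [sub_le_iff_le_add]
      apply csSup_le (hne a)
      rintro y ⟨lam, hlam, rfl⟩
      have hl := (hlip lam hlam).dist_le_mul a ha b hb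
      rw [Real.dist_eq, Real.dist_eq, hM'] at hl
      have h1 : f a lam - f b lam ≤ M * |a - b| := (abs_le.1 hl).2
      have h2 := hleF b hb lam hlam
      linarith
    have h1 := hdir x hx y hy
    have h2 := hdir y hy x hx
    rw [abs_sub_comm y x] at h2
    rw [abs_le]
    constructor <;> linarith
  -- Rademacher
  rw [ae_restrict_iff' measurableSet_Ioo]
  filter_upwards [hFlip.ae_differentiableWithinAt_of_mem_of_real (μ := volume)]
    with t hdiff ht
  have hFd : DifferentiableAt ℝ F t :=
    (hdiff ht).differentiableAt (Ioo_mem_nhds ht.1 ht.2)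
  obtain ⟨lam, hlam, hmax⟩ := hK.exists_sSup_image_eq hKne (hf_cont_lam t ht)
  refine ⟨lam, hlam, hmax, ?_⟩
  have hgd : HasDerivAt (fun s => F s - f s lam) (deriv F t - fdot t lam) t :=
    hFd.hasDerivAt.sub (hf_deriv lam hlam t ht)
  have hmin : IsLocalMin (fun s => F s - f s lam) t := by
    filter_upwards [Ioo_mem_nhds ht.1 ht.2] with s hs
    have h1 : F t = f t lam := hmax
    have h2 := hleF s hs lam hlam
    linarith
  have hz := hmin.hasDerivAt_eq_zero hgd
  have heq : fdot t lam = deriv F t := by linarith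
  rw [heq]
  exact hFd.hasDerivAt
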